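/- Let 𝔤 be a four-dimensional real Lie algebra equipped with a symmetric bilinear form g for which some basis of 𝔤 has Gram matrix diag(1,1,1,−1) (a Lorentzian inner product). Suppose 𝔤 = 𝔥 ⊕ span(v) as vector spaces, where 𝔥 is a three-dimensional Lie subalgebra with [v,𝔥] ⊆ 𝔥, and suppose the restriction of g to 𝔥 is degenerate. Then there exists a basis (e₁,e₂,e₃,e₄) of 𝔤 such that 𝔥 = span(e₁,e₂,e₃), [x,e₄] ∈ 𝔥 for all x ∈ 𝔥, and the Gram matrix of g with respect to (e₁,e₂,e₃,e₄) is [[1,0,0,0],[0,1,0,0],[0,0,0,1],[0,0,1,0]] (i.e. g(e₁,e₁)=g(e₂,e₂)=1, g(e₃,e₄)=g(e₄,e₃)=1, and all other entries vanish). -/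

import Mathlib

private lemma key_pair {G : Type*} [AddCommGroup G] [Module ℝ G]
    (g : LinearMap.BilinForm ℝ G) (b : Module.Basis (Fin 4) ℝ G)
    (hb : ∀ i j, g (b i) (b j) = if i = j then (if i = 3 then -1 else 1) else 0)
    (a0 a1 a2 a3 d0 d1 d2 d3 : ℝ) :
    g (a0 • b 0 + a1 • b 1 + a2 • b 2 + a3 • b 3)
      (d0 • b 0 + d1 • b 1 + d2 • b 2 + d3 • b 3)
      = a0*d0 + a1*d1 + a2*d2 - a3*d3 := by
  have h00 : g (b 0) (b 0) = 1 := by simpa using hb 0 0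
  have h11 : g (b 1) (b 1) = 1 := by simpa using hb 1 1
  have h22 : g (b 2) (b 2) = 1 := by simpa using hb 2 2
  have h33 : g (b 3) (b 3) = -1 := by simpa using hb 3 3
  have h01 : g (b 0) (b 1) = 0 := by simpa using hb 0 1
  have h02 : g (b 0) (b 2) = 0 := by simpa using hb 0 2
  have h03 : g (b 0) (b 3) = 0 := by simpa using hb 0 3
  have h10 : g (b 1) (b 0) = 0 := by simpa using hb 1 0
  have h12 : g (b 1) (b 2) = 0 := by simpa using hb 1 2
  have h13 : g (b 1) (b 3) = 0 := by simpa using hb 1 3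
  have h20 : g (b 2) (b 0) = 0 := by simpa using hb 2 0
  have h21 : g (b 2) (b 1) = 0 := by simpa using hb 2 1
  have h23 : g (b 2) (b 3) = 0 := by simpa using hb 2 3
  have h30 : g (b 3) (b 0) = 0 := by simpa using hb 3 0
  have h31 : g (b 3) (b 1) = 0 := by simpa using hb 3 1
  have h32 : g (b 3) (b 2) = 0 := by simpa using hb 3 2
  simp only [map_add, map_smul, LinearMap.add_apply, LinearMap.smul_apply,
    h00,h11,h22,h33,h01,h02,h03,h10,h12,h13,h20,h21,h23,h30,h31,h32, smul_eq_mul]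
  ring

private lemma exists_ortho (n : EuclideanSpace ℝ (Fin 3)) (hn : (inner ℝ n n : ℝ) = 1) :
    ∃ u w : EuclideanSpace ℝ (Fin 3),
      (inner ℝ u u : ℝ) = 1 ∧ (inner ℝ w w : ℝ) = 1 ∧ (inner ℝ u w : ℝ) = 0 ∧
      (inner ℝ n u : ℝ) = 0 ∧ (inner ℝ n w : ℝ) = 0 := by
  have hnne : n ≠ 0 := by
    intro h0
    rw [h0, inner_zero_left] at hn
    norm_num at hn
  have hK2 : Module.finrank ℝ ((ℝ ∙ n)ᗮ) = 2 := by
    have h1 : Module.finrank ℝ (ℝ ∙ n) = 1 := finrank_span_singleton hnne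
    have h2 := Submodule.finrank_add_finrank_orthogonal (K := ℝ ∙ n)
    rw [h1, finrank_euclideanSpace_fin] at h2
    omega
  have o := (stdOrthonormalBasis ℝ ((ℝ ∙ n)ᗮ : Submodule ℝ (EuclideanSpace ℝ (Fin 3)))).reindex
    (finCongr hK2)
  have honor := o.orthonormal
  rw [orthonormal_iff_ite] at honor
  refine ⟨o 0, o 1, ?_, ?_, ?_, ?_, ?_⟩
  · have := honor 0 0
    rw [Submodule.coe_inner] at this
    simpa using this
  · have := honor 1 1
    rw [Submodule.coe_inner] at this
    simpa using this
  · have := honor 0 1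
    rw [Submodule.coe_inner] at this
    simpa using this
  · exact (o 0).2 n (Submodule.mem_span_singleton_self n)
  · exact (o 1).2 n (Submodule.mem_span_singleton_self n)


set_option maxHeartbeats 2000000 in
theorem stmt_2 {G : Type*} [LieRing G] [LieAlgebra ℝ G]
    (g : LinearMap.BilinForm ℝ G) (hsymm : ∀ x y, g x y = g y x)
    (b : Module.Basis (Fin 4) ℝ G)
    (hb : ∀ i j, g (b i) (b j) = if i = j then (if i = 3 then -1 else 1) else 0)
    (h : LieSubalgebra ℝ G) (hdim : Module.finrank ℝ h = 3)
    (v : G)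
    (hsup : h.toSubmodule ⊔ (ℝ ∙ v) = ⊤)
    (hinf : h.toSubmodule ⊓ (ℝ ∙ v) = ⊥)
    (hder : ∀ x ∈ h, ⁅v, x⁆ ∈ h)
    (hdeg : ∃ x ∈ h, x ≠ 0 ∧ ∀ y ∈ h, g x y = 0) :
    ∃ e : Module.Basis (Fin 4) ℝ G,
      h.toSubmodule = Submodule.span ℝ {e 0, e 1, e 2} ∧
      (∀ x ∈ h, ⁅x, e 3⁆ ∈ h) ∧
      (∀ i j, g (e i) (e j) =
        (!![1,0,0,0; 0,1,0,0; 0,0,0,1; 0,0,1,0] : Matrix (Fin 4) (Fin 4) ℝ) i j) := by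
  classical
  have hFD : FiniteDimensional ℝ G := b.finiteDimensional_of_finite
  have hfr : Module.finrank ℝ G = 4 := by rw [Module.finrank_eq_card_basis b]; simp
  have key := key_pair g b hb
  obtain ⟨x, hxh, hx0, hxperp⟩ := hdeg
  set ξ : Fin 4 → ℝ := fun i => b.repr x i with hξ
  have hxE : x = ξ 0 • b 0 + ξ 1 • b 1 + ξ 2 • b 2 + ξ 3 • b 3 := by
    have := b.sum_repr x
    rw [Fin.sum_univ_four] at this
    exact this.symm
  have hgxx : g x x = 0 := hxperp x hxh
  have hcoord : ξ 0 * ξ 0 + ξ 1 * ξ 1 + ξ 2 * ξ 2 - ξ 3 * ξ 3 = 0 := by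
    rw [hxE] at hgxx; rw [key] at hgxx; exact hgxx
  have hs : ξ 3 ≠ 0 := by
    intro h3
    have h0 : ξ 0 = 0 := by nlinarith [sq_nonneg (ξ 0), sq_nonneg (ξ 1), sq_nonneg (ξ 2)]
    have h1 : ξ 1 = 0 := by nlinarith [sq_nonneg (ξ 0), sq_nonneg (ξ 1), sq_nonneg (ξ 2)]
    have h2 : ξ 2 = 0 := by nlinarith [sq_nonneg (ξ 0), sq_nonneg (ξ 1), sq_nonneg (ξ 2)]
    apply hx0
    rw [hxE, h0, h1, h2, h3]; simp
  -- normalized spatial part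
  set n0 : ℝ := ξ 0 / ξ 3 with hn0
  set n1 : ℝ := ξ 1 / ξ 3 with hn1
  set n2 : ℝ := ξ 2 / ξ 3 with hn2'
  have hnn : n0 * n0 + n1 * n1 + n2 * n2 = 1 := by
    rw [hn0, hn1, hn2']; field_simp; nlinarith [hcoord]
  set n : EuclideanSpace ℝ (Fin 3) := !₂[n0, n1, n2] with hn
  have hnc0 : n 0 = n0 := rfl
  have hnc1 : n 1 = n1 := rfl
  have hnc2 : n 2 = n2 := rfl
  have hinner : ∀ a c : EuclideanSpace ℝ (Fin 3),
      (inner ℝ a c : ℝ) = a 0 * c 0 + a 1 * c 1 + a 2 * c 2 := by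
    intro a c
    simp [PiLp.inner_apply, RCLike.inner_apply, Fin.sum_univ_three]
    ring
  have hnninner : (inner ℝ n n : ℝ) = 1 := by
    rw [hinner, hnc0, hnc1, hnc2]; exact hnn
  obtain ⟨u, w, huu', hww', huw', hnu', hnw'⟩ := exists_ortho n hnninner
  have huu : u 0 * u 0 + u 1 * u 1 + u 2 * u 2 = 1 := by rw [← hinner u u]; exact huu'
  have hww : w 0 * w 0 + w 1 * w 1 + w 2 * w 2 = 1 := by rw [← hinner w w]; exact hww'
  have huw : u 0 * w 0 + u 1 * w 1 + u 2 * w 2 = 0 := by rw [← hinner u w]; exact huw'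
  have hnu : n0 * u 0 + n1 * u 1 + n2 * u 2 = 0 := by
    rw [← hnc0, ← hnc1, ← hnc2, ← hinner n u]; exact hnu'
  have hnw : n0 * w 0 + n1 * w 1 + n2 * w 2 = 0 := by
    rw [← hnc0, ← hnc1, ← hnc2, ← hinner n w]; exact hnw'
  -- the new basis vectors
  obtain ⟨E0, hE0⟩ : ∃ z : G, z = u 0 • b 0 + u 1 • b 1 + u 2 • b 2 + (0:ℝ) • b 3 := ⟨_, rfl⟩
  obtain ⟨E1, hE1⟩ : ∃ z : G, z = w 0 • b 0 + w 1 • b 1 + w 2 • b 2 + (0:ℝ) • b 3 := ⟨_, rfl⟩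
  obtain ⟨E2, hE2⟩ : ∃ z : G, z = n0 • b 0 + n1 • b 1 + n2 • b 2 + (1:ℝ) • b 3 := ⟨_, rfl⟩
  obtain ⟨E3, hE3⟩ : ∃ z : G, z = (n0/2) • b 0 + (n1/2) • b 1 + (n2/2) • b 2 + (-(1/2) : ℝ) • b 3 := ⟨_, rfl⟩
  -- Gram entries
  have G00 : g E0 E0 = 1 := by rw [hE0, key]; linear_combination huu
  have G01 : g E0 E1 = 0 := by rw [hE0, hE1, key]; linear_combination huw
  have G02 : g E0 E2 = 0 := by rw [hE0, hE2, key]; linear_combination hnu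
  have G03 : g E0 E3 = 0 := by rw [hE0, hE3, key]; linear_combination hnu / 2
  have G10 : g E1 E0 = 0 := by rw [hsymm]; exact G01
  have G11 : g E1 E1 = 1 := by rw [hE1, key]; linear_combination hww
  have G12 : g E1 E2 = 0 := by rw [hE1, hE2, key]; linear_combination hnw
  have G13 : g E1 E3 = 0 := by rw [hE1, hE3, key]; linear_combination hnw / 2
  have G20 : g E2 E0 = 0 := by rw [hsymm]; exact G02
  have G21 : g E2 E1 = 0 := by rw [hsymm]; exact G12
  have G22 : g E2 E2 = 0 := by rw [hE2, key]; linear_combination hnn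
  have G23 : g E2 E3 = 1 := by rw [hE2, hE3, key]; linear_combination hnn / 2
  have G30 : g E3 E0 = 0 := by rw [hsymm]; exact G03
  have G31 : g E3 E1 = 0 := by rw [hsymm]; exact G13
  have G32 : g E3 E2 = 1 := by rw [hsymm]; exact G23
  have G33 : g E3 E3 = 0 := by rw [hE3, key]; linear_combination hnn / 4
  -- h is the kernel of g x
  have hxne : g x (b 3) = -(ξ 3) := by
    have h03' : g (b 0) (b 3) = 0 := by simpa using hb 0 3
    have h13' : g (b 1) (b 3) = 0 := by simpa using hb 1 3
    have h23' : g (b 2) (b 3) = 0 := by simpa using hb 2 3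
    have h33' : g (b 3) (b 3) = -1 := by simpa using hb 3 3
    rw [hxE]
    simp only [map_add, map_smul, LinearMap.add_apply, LinearMap.smul_apply,
      h03', h13', h23', h33', smul_eq_mul]
    ring
  have hsurj : Function.Surjective (g x) := by
    intro r
    refine ⟨(-(r / ξ 3)) • b 3, ?_⟩
    rw [map_smul, smul_eq_mul, hxne]
    field_simp
  have hker3 : Module.finrank ℝ (LinearMap.ker (g x)) = 3 := by
    have h1 := LinearMap.finrank_range_add_finrank_ker (g x)
    rw [LinearMap.range_eq_top.mpr hsurj, finrank_top, Module.finrank_self, hfr] at h1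
    omega
  have hhk : h.toSubmodule = LinearMap.ker (g x) := by
    apply Submodule.eq_of_le_of_finrank_le
    · intro y hy
      exact LinearMap.mem_ker.mpr (hxperp y hy)
    · rw [hker3]
      exact le_of_eq hdim.symm
  have hξ0 : ξ 0 = ξ 3 * n0 := by rw [hn0]; field_simp
  have hξ1 : ξ 1 = ξ 3 * n1 := by rw [hn1]; field_simp
  have hξ2 : ξ 2 = ξ 3 * n2 := by rw [hn2']; field_simp
  have hE0h : E0 ∈ h := by
    have : E0 ∈ h.toSubmodule := by
      rw [hhk]
      apply LinearMap.mem_ker.mpr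
      rw [hxE, hE0, key]
      linear_combination ξ 3 * hnu + u 0 * hξ0 + u 1 * hξ1 + u 2 * hξ2
    exact this
  have hE1h : E1 ∈ h := by
    have : E1 ∈ h.toSubmodule := by
      rw [hhk]
      apply LinearMap.mem_ker.mpr
      rw [hxE, hE1, key]
      linear_combination ξ 3 * hnw + w 0 * hξ0 + w 1 * hξ1 + w 2 * hξ2
    exact this
  have hE2h : E2 ∈ h := by
    have : E2 ∈ h.toSubmodule := by
      rw [hhk]
      apply LinearMap.mem_ker.mpr
      rw [hxE, hE2, key]
      linear_combination ξ 3 * hnn + n0 * hξ0 + n1 * hξ1 + n2 * hξ2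
    exact this
  -- linear independence of the family
  set F : Fin 4 → G := ![E0, E1, E2, E3] with hF
  have hFli : LinearIndependent ℝ F := by
    rw [Fintype.linearIndependent_iff]
    intro c hc
    rw [Fin.sum_univ_four] at hc
    have hF0 : F 0 = E0 := rfl
    have hF1 : F 1 = E1 := rfl
    have hF2 : F 2 = E2 := rfl
    have hF3 : F 3 = E3 := rfl
    rw [hF0, hF1, hF2, hF3] at hc
    have p0 := congrArg (fun z => g z E0) hc
    have p1 := congrArg (fun z => g z E1) hc
    have p2 := congrArg (fun z => g z E3) hc
    have p3 := congrArg (fun z => g z E2) hc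
    simp only [map_add, map_smul, LinearMap.add_apply, LinearMap.smul_apply, smul_eq_mul,
      G00, G01, G02, G03, G10, G11, G12, G13, G20, G21, G22, G23, G30, G31, G32, G33,
      LinearMap.map_zero, LinearMap.zero_apply] at p0 p1 p2 p3
    intro i
    fin_cases i <;> simp <;> linarith
  have hcard : Fintype.card (Fin 4) = Module.finrank ℝ G := by rw [hfr]; simp
  set e : Module.Basis (Fin 4) ℝ G := basisOfLinearIndependentOfCardEqFinrank hFli hcard with he
  have hecoe : ∀ i, e i = F i := by
    intro i
    rw [he, coe_basisOfLinearIndependentOfCardEqFinrank]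
  have he0 : e 0 = E0 := hecoe 0
  have he1 : e 1 = E1 := hecoe 1
  have he2 : e 2 = E2 := hecoe 2
  have he3 : e 3 = E3 := hecoe 3
  refine ⟨e, ?_, ?_, ?_⟩
  · -- span equality
    rw [he0, he1, he2]
    have hli3 : LinearIndependent ℝ (![E0, E1, E2] : Fin 3 → G) := by
      have hinj : Function.Injective (![0, 1, 2] : Fin 3 → Fin 4) := by decide
      have := hFli.comp (![0, 1, 2] : Fin 3 → Fin 4) hinj
      convert this using 1
      funext i
      fin_cases i <;> rfl
    have hrange : Set.range (![E0, E1, E2] : Fin 3 → G) = {E0, E1, E2} := by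
      ext z
      simp [Matrix.range_cons, Matrix.range_empty]
      tauto
    have hfrspan : Module.finrank ℝ (Submodule.span ℝ ({E0, E1, E2} : Set G)) = 3 := by
      rw [← hrange]
      rw [finrank_span_eq_card hli3]
      simp
    symm
    apply Submodule.eq_of_le_of_finrank_le
    · rw [Submodule.span_le]
      intro z hz
      simp only [Set.mem_insert_iff, Set.mem_singleton_iff] at hz
      rcases hz with rfl | rfl | rfl
      · exact hE0h
      · exact hE1h
      · exact hE2h
    · rw [hfrspan]
      exact le_of_eq hdim
  · -- bracket condition
    intro y hy
    have hmem : e 3 ∈ (⊤ : Submodule ℝ G) := Submodule.mem_top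
    rw [← hsup] at hmem
    obtain ⟨a, ha, z, hz, hsum⟩ := Submodule.mem_sup.mp hmem
    obtain ⟨c, rfl⟩ := Submodule.mem_span_singleton.mp hz
    rw [← hsum, lie_add, lie_smul]
    apply h.add_mem
    · exact h.lie_mem hy ha
    · apply h.smul_mem
      have A : (⁅y, v⁆ : G) = -⁅v, y⁆ := by
        rw [← lie_skew v y, neg_neg]
      rw [A]
      exact neg_mem (hder y hy)
  · -- Gram matrix
    intro i j
    fin_cases i <;> fin_cases j
    · show g (e 0) (e 0) = (1:ℝ); rw [he0]; exact G00
    · show g (e 0) (e 1) = (0:ℝ); rw [he0, he1]; exact G01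
    · show g (e 0) (e 2) = (0:ℝ); rw [he0, he2]; exact G02
    · show g (e 0) (e 3) = (0:ℝ); rw [he0, he3]; exact G03
    · show g (e 1) (e 0) = (0:ℝ); rw [he1, he0]; exact G10
    · show g (e 1) (e 1) = (1:ℝ); rw [he1]; exact G11
    · show g (e 1) (e 2) = (0:ℝ); rw [he1, he2]; exact G12
    · show g (e 1) (e 3) = (0:ℝ); rw [he1, he3]; exact G13
    · show g (e 2) (e 0) = (0:ℝ); rw [he2, he0]; exact G20
    · show g (e 2) (e 1) = (0:ℝ); rw [he2, he1]; exact G21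
    · show g (e 2) (e 2) = (0:ℝ); rw [he2]; exact G22
    · show g (e 2) (e 3) = (1:ℝ); rw [he2, he3]; exact G23
    · show g (e 3) (e 0) = (0:ℝ); rw [he3, he0]; exact G30
    · show g (e 3) (e 1) = (0:ℝ); rw [he3, he1]; exact G31
    · show g (e 3) (e 2) = (1:ℝ); rw [he3, he2]; exact G32
    · show g (e 3) (e 3) = (0:ℝ); rw [he3]; exact G33
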